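/- Let α be a reduced word of ω with tower decomposition a_1 … a_k such that fin(a_i) > in(a_{i+1}) for all i. If for some i we have in(a_i) ≤ in(a_{i+1}), then fin(a_{i+1}) < fin(a_i). -/

import Mathlib

/-- The adjacent transposition `sᵢ = (i, i+1)` as a permutation of `ℕ`. -/
def sGen (i : ℕ) : Equiv.Perm ℕ := Equiv.swap i (i + 1)

/-- The permutation represented by a word. -/
def toPerm (w : List ℕ) : Equiv.Perm ℕ := (w.map sGen).prod

/-- A word is reduced (of minimal length among words representing the same permutation). -/
def IsReducedWord (w : List ℕ) : Prop := ∀ v : List ℕ, toPerm v = toPerm w → w.length ≤ v.length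

/-- `w` is a reduced word for the permutation `ω`. -/
def IsReducedWordOf (w : List ℕ) (ω : Equiv.Perm ℕ) : Prop :=
  toPerm w = ω ∧ ∀ v : List ℕ, toPerm v = ω → w.length ≤ v.length

/-- The relation `<₁`: `β` is obtained from `α` by swapping two adjacent letters
`x, y` with `y ≥ x + 2` (the smaller letter moves right). -/
def Rel1 (α β : List ℕ) : Prop :=
  ∃ (p q : List ℕ) (x y : ℕ), x + 2 ≤ y ∧
    α = p ++ x :: y :: q ∧ β = p ++ y :: x :: q

/-- Lexicographic order (non-strict) on words. -/
def LexLe (α β : List ℕ) : Prop := α = β ∨ List.Lex (· < ·) α β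

/-- A tower word: a nonempty increasing run of consecutive integers. -/
def IsTowerWord (a : List ℕ) : Prop := a ≠ [] ∧ a.Chain' (fun x y => y = x + 1)

/-- First letter of a tower word. -/
def inn (a : List ℕ) : ℕ := a.headI

/-- Last letter of a tower word. -/
def fin' (a : List ℕ) : ℕ := a.getLastD 0

/-- `L` is the tower decomposition of `w`: a factorization into maximal tower words. -/
def IsTowerDecomp (w : List ℕ) (L : List (List ℕ)) : Prop :=
  L.flatten = w ∧ (∀ a ∈ L, IsTowerWord a) ∧
    L.Chain' (fun a b => inn b ≠ fin' a + 1)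

/-- The relation `<₂`: a directed long-braid move of a tower word past its left neighbour. -/
def Rel2 (α β : List ℕ) : Prop :=
  ∃ (A B : List (List ℕ)) (a b b1 b2 : List ℕ),
    IsTowerDecomp α (A ++ a :: b :: B) ∧
    inn a ≤ inn b ∧ inn b < fin' b ∧ fin' b < fin' a ∧
    IsTowerWord b1 ∧ (b2 = [] ∨ IsTowerWord b2) ∧ b1 ++ b2 = b ∧
    β = A.flatten ++ (b1.map (· + 1)) ++ a ++ b2 ++ B.flatten

/-- The directed-braid order: reflexive-transitive closure of `<₁ ∪ <₂`. -/
def DBraid : List ℕ → List ℕ → Prop :=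
  Relation.ReflTransGen (fun α β => Rel1 α β ∨ Rel2 α β)

/-- The natural word of `ω`: the reduced word whose tower decomposition has
strictly decreasing initial letters. -/
def IsNaturalWordOf (η : List ℕ) (ω : Equiv.Perm ℕ) : Prop :=
  IsReducedWordOf η ω ∧ ∃ L, IsTowerDecomp η L ∧ L.Chain' (fun a b => inn b < inn a)

/-- A natural basic word of `ω`: a reduced word whose tower decomposition satisfies
`fin(aᵢ) > in(aᵢ₊₁)` for all `i`. -/
def IsNaturalBasicOf (β : List ℕ) (ω : Equiv.Perm ℕ) : Prop :=
  IsReducedWordOf β ω ∧ ∃ L, IsTowerDecomp β L ∧ L.Chain' (fun a b => inn b < fin' a)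

/-- One step of the track of a letter `b` through a tower word `a`. -/
def trackStep (a : List ℕ) (b : ℕ) : Option ℕ :=
  if inn a < b ∧ b ≤ fin' a then some (b - 1)
  else if b + 2 ≤ inn a ∨ fin' a + 2 ≤ b then some b
  else none

/-- The track sequence of `b` through a list of tower words. -/
def trackSeq : ℕ → List (List ℕ) → List ℕ
  | b, [] => [b]
  | b, a :: rest =>
    match trackStep a b with
    | none => [b]
    | some b' => b :: trackSeq b' rest

/-- The tower decomposition of a word, as a function. -/
def towerDecomp : List ℕ → List (List ℕ)
  | [] => []
  | x :: xs =>
    match towerDecomp xs with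
    | [] => [[x]]
    | t :: ts => if t.headI = x + 1 then (x :: t) :: ts else [x] :: t :: ts

/-- The tower word `[i, i+1, ..., j]`. -/
def TW (i j : ℕ) : List ℕ := (List.range (j + 1 - i)).map (i + ·)

lemma TW_length (i j : ℕ) : (TW i j).length = j + 1 - i := by simp [TW]

lemma toPerm_append (u v : List ℕ) : toPerm (u ++ v) = toPerm u * toPerm v := by
  simp [toPerm]

lemma toPerm_cons (x : ℕ) (w : List ℕ) : toPerm (x :: w) = sGen x * toPerm w := by
  simp [toPerm]

lemma TW_cons (i j : ℕ) (h : i ≤ j) : TW i j = i :: TW (i + 1) j := by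
  unfold TW
  rw [show j + 1 - i = (j - i) + 1 by omega, List.range_succ_eq_map]
  simp only [List.map_cons, List.map_map, Nat.add_zero]
  congr 1
  · rw [show j + 1 - (i + 1) = j - i by omega]
    apply List.map_congr_left
    intro x _
    simp [Function.comp]
    omega

lemma TW_split (i m j : ℕ) (him : i ≤ m) (hmj : m ≤ j) :
    TW i j = TW i m ++ TW (m + 1) j := by
  unfold TW
  rw [show j + 1 - i = (m + 1 - i) + (j - m) by omega, List.range_add, List.map_append]
  congr 1
  rw [List.map_map, show j + 1 - (m + 1) = j - m by omega]
  apply List.map_congr_left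
  intro x _
  simp [Function.comp]
  omega

lemma toPerm_TW_aux : ∀ (n i k : ℕ), toPerm (TW i (i + n)) k =
    if k = i + n + 1 then i else if i ≤ k ∧ k ≤ i + n then k + 1 else k := by
  intro n
  induction n with
  | zero =>
    intro i k
    have h1 : TW i (i + 0) = [i] := by
      unfold TW
      rw [show i + 0 + 1 - i = 1 by omega]
      norm_num [List.range_succ]
    rw [h1]
    show sGen i k = _
    simp only [sGen, Equiv.swap_apply_def]
    split_ifs <;> omega
  | succ n ih =>
    intro i k
    rw [TW_cons i (i + (n+1)) (by omega), toPerm_cons, Equiv.Perm.mul_apply,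
      show i + (n + 1) = (i + 1) + n by omega, ih]
    simp only [sGen, Equiv.swap_apply_def]
    split_ifs <;> omega

lemma toPerm_TW_apply (i j : ℕ) (h : i ≤ j) (k : ℕ) : toPerm (TW i j) k =
    if k = j + 1 then i else if i ≤ k ∧ k ≤ j then k + 1 else k := by
  have := toPerm_TW_aux (j - i) i k
  rwa [show i + (j - i) = j by omega] at this

lemma braid (r q s : ℕ) (hrq : r < q) (hqs : q ≤ s) :
    toPerm (TW r q ++ TW r s) = toPerm (TW (r + 1) s ++ TW r (q - 1)) := by
  rw [toPerm_append, toPerm_append]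
  ext k
  simp only [Equiv.Perm.mul_apply]
  rw [toPerm_TW_apply r s (by omega), toPerm_TW_apply r (q-1) (by omega),
    toPerm_TW_apply r q (by omega), toPerm_TW_apply (r+1) s (by omega)]
  split_ifs <;> omega

lemma tower_eq_TW : ∀ (a : List ℕ), IsTowerWord a →
    a = TW (inn a) (fin' a) ∧ inn a ≤ fin' a := by
  intro a
  induction a with
  | nil => intro h; exact absurd rfl h.1
  | cons x rest ih =>
    intro h
    match rest, h with
    | [], _ =>
      refine ⟨?_, le_refl _⟩
      have : TW x x = [x] := by
        unfold TW
        rw [show x + 1 - x = 1 by omega]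
        norm_num [List.range_succ]
      simpa [inn, fin'] using this.symm
    | y :: rest', h =>
      have hchain := h.2
      rw [List.Chain', List.isChain_cons_cons] at hchain
      obtain ⟨hyx, hc⟩ := hchain
      have ht : IsTowerWord (y :: rest') := ⟨List.cons_ne_nil _ _, hc⟩
      obtain ⟨heq, hle⟩ := ih ht
      have hfin : fin' (x :: y :: rest') = fin' (y :: rest') := by
        simp [fin', List.getLastD_cons]
      have hinn : inn (x :: y :: rest') = x := rfl
      have hinn2 : inn (y :: rest') = x + 1 := by simp [inn, hyx]
      rw [hinn2] at heq hle
      constructor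
      · rw [hinn, hfin, TW_cons x _ (by omega), ← heq]
      · rw [hinn, hfin]; omega

lemma core_shorter (p q r s : ℕ) (hpr : p ≤ r) (hrq : r < q) (hqs : q ≤ s) :
    ∃ c : List ℕ, toPerm c = toPerm (TW p q ++ TW r s) ∧
      c.length + 2 = (TW p q ++ TW r s).length := by
  rcases eq_or_lt_of_le hpr with h | h
  · subst h
    refine ⟨TW (p + 1) s ++ TW p (q - 1), (braid p q s hrq hqs).symm, ?_⟩
    simp [TW_length]
    omega
  · refine ⟨TW p (r - 1) ++ (TW (r + 1) s ++ TW r (q - 1)), ?_, ?_⟩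
    · have hsplit : TW p q = TW p (r - 1) ++ TW r q := by
        have := TW_split p (r - 1) q (by omega) (by omega)
        rwa [show r - 1 + 1 = r by omega] at this
      have hb2 := braid r q s hrq hqs
      rw [toPerm_append, toPerm_append] at hb2
      rw [hsplit, List.append_assoc]
      simp only [toPerm_append]
      rw [hb2]
    · simp [TW_length]
      omega

/-- if the tower decomposition of a reduced word satisfies
`fin(aᵢ) > in(aᵢ₊₁)` everywhere and `in(aᵢ) ≤ in(aᵢ₊₁)` at some boundary,
then `fin(aᵢ₊₁) < fin(aᵢ)` there. -/
theorem natural_basic_fin_lt (ω : Equiv.Perm ℕ) (α : List ℕ)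
    (hα : IsReducedWordOf α ω) (L : List (List ℕ))
    (hd : IsTowerDecomp α L)
    (hnb : L.Chain' (fun a b => inn b < fin' a))
    (A B : List (List ℕ)) (a b : List ℕ)
    (hL : L = A ++ a :: b :: B) (h1 : inn a ≤ inn b) :
    fin' b < fin' a := by
  by_contra hcon
  push_neg at hcon
  -- tower words
  have ha : IsTowerWord a := hd.2.1 a (by simp [hL])
  have hb : IsTowerWord b := hd.2.1 b (by simp [hL])
  obtain ⟨haT, hpq⟩ := tower_eq_TW a ha
  obtain ⟨hbT, hrs⟩ := tower_eq_TW b hb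
  -- the chain link
  have hlink : inn b < fin' a := by
    rw [hL, List.Chain', List.isChain_append] at hnb
    exact (List.isChain_cons_cons.mp hnb.2.1).1
  -- shorter word
  obtain ⟨c, hc, hclen⟩ := core_shorter (inn a) (fin' a) (inn b) (fin' b) h1 hlink hcon
  have hαeq : α = A.flatten ++ ((a ++ b) ++ B.flatten) := by
    rw [← hd.1, hL]
    simp
  set v : List ℕ := A.flatten ++ (c ++ B.flatten) with hv
  have hperm : toPerm v = ω := by
    rw [← hα.1, hαeq, hv]
    simp only [toPerm_append]
    rw [hc, ← haT, ← hbT, toPerm_append]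
  have hlen := hα.2 v hperm
  have h2 : c.length + 2 = a.length + b.length := by
    rw [haT, hbT]
    simpa using hclen
  rw [hαeq, hv] at hlen
  simp only [List.length_append] at hlen
  omega
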